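/- If U₁,...,Uₙ,V₁,...,Vₙ are 2n jointly independent uniform [0,1] random variables, then Cov( n⁻² ∑_{i,j} |Uᵢ - Vⱼ|, n⁻¹ ∑_i |Uᵢ - Vᵢ| ) = (n+4)/(90 n²). -/

import Mathlib

open MeasureTheory ProbabilityTheory Finset


noncomputable def unif : Measure ℝ := volume.restrict (Set.Icc (0:ℝ) 1)

instance : IsProbabilityMeasure unif := by
  constructor
  simp [unif, Real.volume_Icc]

lemma g_eval {x : ℝ} (hx : x ∈ Set.Icc (0:ℝ) 1) :
    ∫ z, |x - z| ∂unif = x^2 - x + 1/2 := by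
  obtain ⟨h0, h1⟩ := hx
  rw [unif, integral_Icc_eq_integral_Ioc, ← intervalIntegral.integral_of_le zero_le_one]
  rw [← intervalIntegral.integral_add_adjacent_intervals (a := 0) (b := x) (c := 1)
    (by apply Continuous.intervalIntegrable; continuity)
    (by apply Continuous.intervalIntegrable; continuity)]
  have e1 : ∫ z in (0:ℝ)..x, |x - z| = ∫ z in (0:ℝ)..x, (x - z) := by
    apply intervalIntegral.integral_congr
    intro z hz
    rw [Set.uIcc_of_le h0] at hz
    exact abs_of_nonneg (by linarith [hz.2])
  have e2 : ∫ z in x..1, |x - z| = ∫ z in x..1, (z - x) := by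
    apply intervalIntegral.integral_congr
    intro z hz
    rw [Set.uIcc_of_le h1] at hz
    show |x - z| = z - x
    rw [abs_sub_comm]
    exact abs_of_nonneg (by linarith [hz.1])
  rw [e1, e2]
  rw [intervalIntegral.integral_sub intervalIntegrable_const intervalIntegral.intervalIntegrable_id,
      intervalIntegral.integral_sub intervalIntegral.intervalIntegrable_id intervalIntegrable_const]
  simp [integral_id]
  ring

lemma intQ (a b c d e : ℝ) : ∫ x in (0:ℝ)..1, (a*x^4 + b*x^3 + c*x^2 + d*x + e)
    = a/5 + b/4 + c/3 + d/2 + e := by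
  have ii : ∀ f : ℝ → ℝ, Continuous f → IntervalIntegrable f volume 0 1 :=
    fun f hf => hf.intervalIntegrable 0 1
  rw [intervalIntegral.integral_add (ii _ (by continuity)) (ii _ (by continuity)),
      intervalIntegral.integral_add (ii _ (by continuity)) (ii _ (by continuity)),
      intervalIntegral.integral_add (ii _ (by continuity)) (ii _ (by continuity)),
      intervalIntegral.integral_add (ii _ (by continuity)) (ii _ (by continuity))]
  rw [intervalIntegral.integral_const_mul d]
  simp [integral_pow, integral_id, intervalIntegral.integral_const,
    intervalIntegral.integral_const_mul]
  ring

lemma unif_quartic (a b c d e : ℝ) : ∫ x, (a*x^4 + b*x^3 + c*x^2 + d*x + e) ∂unif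
    = a/5 + b/4 + c/3 + d/2 + e := by
  rw [unif, integral_Icc_eq_integral_Ioc, ← intervalIntegral.integral_of_le zero_le_one, intQ]

lemma h_eval {x : ℝ} (hx : x ∈ Set.Icc (0:ℝ) 1) :
    ∫ z, |x - z|^2 ∂unif = x^2 - x + 1/3 := by
  have : ∀ z : ℝ, |x - z|^2 = 0*z^4 + 0*z^3 + 1*z^2 + (-2*x)*z + x^2 := by
    intro z; rw [sq_abs]; ring
  rw [show (fun z => |x - z|^2) = fun z => 0*z^4 + 0*z^3 + 1*z^2 + (-2*x)*z + x^2 from funext this]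
  rw [unif_quartic]; ring

lemma p1 : ∫ x, (x^2 - x + 1/2) ∂unif = 1/3 := by
  have : (fun x : ℝ => x^2 - x + 1/2) = fun x => 0*x^4 + 0*x^3 + 1*x^2 + (-1)*x + 1/2 := by
    funext x; ring
  rw [this, unif_quartic]; try norm_num

lemma p2 : ∫ x, (x^2 - x + 1/2) * (x^2 - x + 1/2) ∂unif = 7/60 := by
  have : (fun x : ℝ => (x^2 - x + 1/2) * (x^2 - x + 1/2))
      = fun x => 1*x^4 + (-2)*x^3 + 2*x^2 + (-1)*x + 1/4 := by
    funext x; ring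
  rw [this, unif_quartic]; try norm_num

lemma p3 : ∫ x, (x^2 - x + 1/3) ∂unif = 1/6 := by
  have : (fun x : ℝ => x^2 - x + 1/3) = fun x => 0*x^4 + 0*x^3 + 1*x^2 + (-1)*x + 1/3 := by
    funext x; ring
  rw [this, unif_quartic]; try norm_num

lemma unif_prod_eq : unif.prod unif
    = volume.restrict ((Set.Icc (0:ℝ) 1) ×ˢ (Set.Icc (0:ℝ) 1)) := by
  rw [unif, Measure.prod_restrict, ← Measure.volume_eq_prod]

lemma integrable_unif_prod {f : ℝ × ℝ → ℝ} (hf : Continuous f) :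
    Integrable f (unif.prod unif) := by
  rw [unif_prod_eq]
  exact hf.continuousOn.integrableOn_compact (isCompact_Icc.prod isCompact_Icc)

lemma E_pair1 : ∫ p : ℝ × ℝ, |p.1 - p.2| ∂(unif.prod unif) = 1/3 := by
  rw [MeasureTheory.integral_prod _ (integrable_unif_prod (by continuity))]
  have h : ∀ᵐ x ∂unif, (∫ y, |x - y| ∂unif) = x^2 - x + 1/2 := by
    filter_upwards [ae_restrict_mem measurableSet_Icc] with x hx
    exact g_eval hx
  rw [integral_congr_ae h, p1]

lemma E_pair2 : ∫ p : ℝ × ℝ, |p.1 - p.2| * |p.1 - p.2| ∂(unif.prod unif) = 1/6 := by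
  rw [MeasureTheory.integral_prod _ (integrable_unif_prod (by continuity))]
  have h : ∀ᵐ x ∂unif, (∫ y, |x - y| * |x - y| ∂unif) = x^2 - x + 1/3 := by
    filter_upwards [ae_restrict_mem measurableSet_Icc] with x hx
    have : (fun y => |x - y| * |x - y|) = fun y => |x - y|^2 := by
      funext y; ring
    rw [this, h_eval hx]
  rw [integral_congr_ae h, p3]

lemma unif_prod3_eq : (unif.prod unif).prod unif
    = volume.restrict (((Set.Icc (0:ℝ) 1) ×ˢ (Set.Icc (0:ℝ) 1)) ×ˢ (Set.Icc (0:ℝ) 1)) := by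
  rw [unif_prod_eq, unif, Measure.prod_restrict, ← Measure.volume_eq_prod]

lemma integrable_unif_prod3 {f : (ℝ × ℝ) × ℝ → ℝ} (hf : Continuous f) :
    Integrable f ((unif.prod unif).prod unif) := by
  rw [unif_prod3_eq]
  exact hf.continuousOn.integrableOn_compact ((isCompact_Icc.prod isCompact_Icc).prod isCompact_Icc)

lemma E_trip : ∫ q : (ℝ × ℝ) × ℝ, |q.1.1 - q.1.2| * |q.1.1 - q.2| ∂((unif.prod unif).prod unif)
    = 7/60 := by
  have hc : Continuous (fun q : (ℝ × ℝ) × ℝ => |q.1.1 - q.1.2| * |q.1.1 - q.2|) := by fun_prop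
  rw [MeasureTheory.integral_prod _ (integrable_unif_prod3 hc)]
  have h : ∀ᵐ p ∂(unif.prod unif),
      (∫ z, |p.1 - p.2| * |p.1 - z| ∂unif) = |p.1 - p.2| * (p.1^2 - p.1 + 1/2) := by
    rw [unif_prod_eq]
    filter_upwards [ae_restrict_mem (measurableSet_Icc.prod measurableSet_Icc)] with p hp
    rw [MeasureTheory.integral_const_mul, g_eval hp.1]
  rw [integral_congr_ae h,
    MeasureTheory.integral_prod _ (integrable_unif_prod (by continuity))]
  have h2 : ∀ᵐ x ∂unif,
      (∫ y, |x - y| * (x^2 - x + 1/2) ∂unif) = (x^2 - x + 1/2) * (x^2 - x + 1/2) := by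
    filter_upwards [ae_restrict_mem measurableSet_Icc] with x hx
    rw [MeasureTheory.integral_mul_const, g_eval hx]
  rw [integral_congr_ae h2, p2]

open ProbabilityTheory

section Transfer
variable {Ω : Type*} [MeasureSpace Ω] [IsProbabilityMeasure (ℙ : Measure Ω)]

lemma map_pair_eq {X Y : Ω → ℝ} (hX : Measurable X) (hY : Measurable Y)
    (h : IndepFun X Y ℙ) (hXl : Measure.map X ℙ = unif) (hYl : Measure.map Y ℙ = unif) :
    Measure.map (fun ω => (X ω, Y ω)) ℙ = unif.prod unif := by
  rw [(indepFun_iff_map_prod_eq_prod_map_map hX.aemeasurable hY.aemeasurable).1 h, hXl, hYl]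

lemma integral_pairU {X Y : Ω → ℝ} (hX : Measurable X) (hY : Measurable Y)
    (h : IndepFun X Y ℙ) (hXl : Measure.map X ℙ = unif) (hYl : Measure.map Y ℙ = unif)
    {f : ℝ × ℝ → ℝ} (hf : Continuous f) :
    ∫ ω, f (X ω, Y ω) ∂ℙ = ∫ p, f p ∂(unif.prod unif) := by
  rw [← map_pair_eq hX hY h hXl hYl,
    integral_map (hX.prodMk hY).aemeasurable hf.aestronglyMeasurable]

lemma map_triple_eq {X Y Z : Ω → ℝ} (hX : Measurable X) (hY : Measurable Y) (hZ : Measurable Z)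
    (h1 : IndepFun X Y ℙ) (h2 : IndepFun (fun ω => (X ω, Y ω)) Z ℙ)
    (hXl : Measure.map X ℙ = unif) (hYl : Measure.map Y ℙ = unif)
    (hZl : Measure.map Z ℙ = unif) :
    Measure.map (fun ω => ((X ω, Y ω), Z ω)) ℙ = (unif.prod unif).prod unif := by
  rw [(indepFun_iff_map_prod_eq_prod_map_map (hX.prodMk hY).aemeasurable hZ.aemeasurable).1 h2,
    map_pair_eq hX hY h1 hXl hYl, hZl]

lemma integral_tripleU {X Y Z : Ω → ℝ} (hX : Measurable X) (hY : Measurable Y) (hZ : Measurable Z)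
    (h1 : IndepFun X Y ℙ) (h2 : IndepFun (fun ω => (X ω, Y ω)) Z ℙ)
    (hXl : Measure.map X ℙ = unif) (hYl : Measure.map Y ℙ = unif)
    (hZl : Measure.map Z ℙ = unif) {f : (ℝ × ℝ) × ℝ → ℝ} (hf : Continuous f) :
    ∫ ω, f ((X ω, Y ω), Z ω) ∂ℙ = ∫ q, f q ∂((unif.prod unif).prod unif) := by
  rw [← map_triple_eq hX hY hZ h1 h2 hXl hYl hZl,
    integral_map ((hX.prodMk hY).prodMk hZ).aemeasurable hf.aestronglyMeasurable]

end Transfer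


theorem cov_double_sum_diag_sum
    {Ω : Type*} [MeasureSpace Ω] [IsProbabilityMeasure (ℙ : Measure Ω)]
    (n : ℕ) (hn : 1 ≤ n) (U V : Fin n → Ω → ℝ)
    (hU : ∀ i, Measurable (U i)) (hV : ∀ i, Measurable (V i))
    (hInd : iIndepFun (Sum.elim U V) ℙ)
    (hUunif : ∀ i, Measure.map (U i) ℙ = volume.restrict (Set.Icc (0:ℝ) 1))
    (hVunif : ∀ i, Measure.map (V i) ℙ = volume.restrict (Set.Icc (0:ℝ) 1)) :
    (∫ ω, ((1 / (n:ℝ)^2) * ∑ i : Fin n, ∑ j : Fin n, |U i ω - V j ω|)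
        * ((1 / (n:ℝ)) * ∑ i : Fin n, |U i ω - V i ω|) ∂ℙ)
      - (∫ ω, (1 / (n:ℝ)^2) * ∑ i : Fin n, ∑ j : Fin n, |U i ω - V j ω| ∂ℙ)
        * (∫ ω, (1 / (n:ℝ)) * ∑ i : Fin n, |U i ω - V i ω| ∂ℙ)
      = ((n:ℝ) + 4) / (90 * (n:ℝ)^2) := by
  classical
  have hn0 : (n:ℝ) ≠ 0 := Nat.cast_ne_zero.2 (by omega)
  have hW : ∀ s : Fin n ⊕ Fin n, Measurable (Sum.elim U V s) := by
    rintro (i | j); exacts [hU i, hV j]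
  have hWl : ∀ s : Fin n ⊕ Fin n, Measure.map (Sum.elim U V s) ℙ = unif := by
    rintro (i | j); exacts [hUunif i, hVunif j]
  have hWae : ∀ s : Fin n ⊕ Fin n, ∀ᵐ ω ∂ℙ, Sum.elim U V s ω ∈ Set.Icc (0:ℝ) 1 := by
    intro s
    have h0 : ℙ ((Sum.elim U V s) ⁻¹' (Set.Icc (0:ℝ) 1)ᶜ) = 0 := by
      rw [← Measure.map_apply (hW s) measurableSet_Icc.compl, hWl s, unif,
        Measure.restrict_apply measurableSet_Icc.compl]
      simp
    rw [ae_iff]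
    exact h0
  have hUae : ∀ i, ∀ᵐ ω ∂ℙ, U i ω ∈ Set.Icc (0:ℝ) 1 := fun i => hWae (Sum.inl i)
  have hVae : ∀ j, ∀ᵐ ω ∂ℙ, V j ω ∈ Set.Icc (0:ℝ) 1 := fun j => hWae (Sum.inr j)
  have hmA : ∀ i j, Measurable fun ω => |U i ω - V j ω| := fun i j => ((hU i).sub (hV j)).abs
  have hintA : ∀ i j, Integrable (fun ω => |U i ω - V j ω|) ℙ := by
    intro i j
    refine Integrable.mono' (integrable_const (1:ℝ)) (hmA i j).aestronglyMeasurable ?_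
    filter_upwards [hUae i, hVae j] with ω h1 h2
    rw [Real.norm_eq_abs, abs_abs]
    exact abs_le.2 ⟨by linarith [h1.1, h1.2, h2.1, h2.2], by linarith [h1.1, h1.2, h2.1, h2.2]⟩
  have hintAB : ∀ i j k, Integrable (fun ω => |U i ω - V j ω| * |U k ω - V k ω|) ℙ := by
    intro i j k
    refine Integrable.mono' (integrable_const (1:ℝ))
      ((hmA i j).mul (hmA k k)).aestronglyMeasurable ?_
    filter_upwards [hUae i, hVae j, hUae k, hVae k] with ω h1 h2 h3 h4
    rw [Real.norm_eq_abs, abs_mul, abs_abs, abs_abs]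
    have b1 : |U i ω - V j ω| ≤ 1 :=
      abs_le.2 ⟨by linarith [h1.1, h1.2, h2.1, h2.2], by linarith [h1.1, h1.2, h2.1, h2.2]⟩
    have b2 : |U k ω - V k ω| ≤ 1 :=
      abs_le.2 ⟨by linarith [h3.1, h3.2, h4.1, h4.2], by linarith [h3.1, h3.2, h4.1, h4.2]⟩
    exact mul_le_one₀ b1 (abs_nonneg _) b2
  have hEA : ∀ i j, ∫ ω, |U i ω - V j ω| ∂ℙ = 1/3 := by
    intro i j
    have hind : IndepFun (U i) (V j) ℙ :=
      hInd.indepFun (show (Sum.inl i : Fin n ⊕ Fin n) ≠ Sum.inr j by simp)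
    have h' := (integral_pairU (hU i) (hV j) hind (hUunif i) (hVunif j)
      (f := fun p : ℝ × ℝ => |p.1 - p.2|) (by fun_prop)).trans E_pair1
    simpa using h'
  set e : Fin n → Fin n → Fin n → ℝ := fun i j k =>
    1/9 + (if i = k then (1:ℝ)/180 else 0) + (if j = k then (1:ℝ)/180 else 0)
        + (if i = k then (if j = k then (2:ℝ)/45 else 0) else 0) with he
  have hE : ∀ i j k, ∫ ω, |U i ω - V j ω| * |U k ω - V k ω| ∂ℙ = e i j k := by
    intro i j k
    by_cases hik : i = k
    · by_cases hjk : j = k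
      · subst hik; subst hjk
        have hind : IndepFun (U j) (V j) ℙ :=
          hInd.indepFun (show (Sum.inl j : Fin n ⊕ Fin n) ≠ Sum.inr j by simp)
        have h' := (integral_pairU (hU j) (hV j) hind (hUunif j) (hVunif j)
          (f := fun p : ℝ × ℝ => |p.1 - p.2| * |p.1 - p.2|) (by fun_prop)).trans E_pair2
        have h'' : ∫ ω, |U j ω - V j ω| * |U j ω - V j ω| ∂ℙ = 1/6 := by simpa using h'
        rw [h'', he]; try norm_num
      · subst hik
        have h2 : IndepFun (fun ω => (U i ω, V j ω)) (V i) ℙ :=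
          hInd.indepFun_prodMk hW (Sum.inl i) (Sum.inr j) (Sum.inr i) (by simp) (by simp [hjk])
        have h1' : IndepFun (U i) (V j) ℙ :=
          hInd.indepFun (show (Sum.inl i : Fin n ⊕ Fin n) ≠ Sum.inr j by simp)
        have h' := (integral_tripleU (hU i) (hV j) (hV i) h1' h2
          (hUunif i) (hVunif j) (hVunif i)
          (f := fun q : (ℝ × ℝ) × ℝ => |q.1.1 - q.1.2| * |q.1.1 - q.2|) (by fun_prop)).trans E_trip
        have h'' : ∫ ω, |U i ω - V j ω| * |U i ω - V i ω| ∂ℙ = 7/60 := by simpa using h'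
        rw [h'', he]; simp [hjk]; try norm_num
    · by_cases hjk : j = k
      · rw [hjk]
        have hcomm : (fun ω => |U i ω - V k ω| * |U k ω - V k ω|)
            = fun ω => |V k ω - U i ω| * |V k ω - U k ω| := by
          funext ω; rw [abs_sub_comm, abs_sub_comm (U k ω)]
        have h2 : IndepFun (fun ω => (V k ω, U i ω)) (U k) ℙ :=
          hInd.indepFun_prodMk hW (Sum.inr k) (Sum.inl i) (Sum.inl k) (by simp) (by simp [hik])
        have h1' : IndepFun (V k) (U i) ℙ :=
          hInd.indepFun (show (Sum.inr k : Fin n ⊕ Fin n) ≠ Sum.inl i by simp)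
        have h' := (integral_tripleU (hV k) (hU i) (hU k) h1' h2
          (hVunif k) (hUunif i) (hUunif k)
          (f := fun q : (ℝ × ℝ) × ℝ => |q.1.1 - q.1.2| * |q.1.1 - q.2|) (by fun_prop)).trans E_trip
        have h'' : ∫ ω, |V k ω - U i ω| * |V k ω - U k ω| ∂ℙ = 7/60 := by simpa using h'
        rw [hcomm, h'', he]; simp [hik, hjk]; try norm_num
      · have hpind : IndepFun (fun ω => (U i ω, V j ω)) (fun ω => (U k ω, V k ω)) ℙ :=
          hInd.indepFun_prodMk_prodMk hW (Sum.inl i) (Sum.inr j) (Sum.inl k) (Sum.inr k)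
            (by simp [hik]) (by simp) (by simp) (by simp [hjk])
        have hind : IndepFun (fun ω => |U i ω - V j ω|) (fun ω => |U k ω - V k ω|) ℙ :=
          hpind.comp ((measurable_fst.sub measurable_snd).abs)
            ((measurable_fst.sub measurable_snd).abs)
        have h'' : ∫ ω, |U i ω - V j ω| * |U k ω - V k ω| ∂ℙ = 1/9 := by
          have := hind.integral_fun_mul_eq_mul_integral (hmA i j).aestronglyMeasurable (hmA k k).aestronglyMeasurable
          rw [hEA i j, hEA k k] at this
          rw [this]; try norm_num
        rw [h'', he]; simp [hik, hjk]; try norm_num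
  have h3 : ∫ ω, (1 / (n:ℝ)) * ∑ i : Fin n, |U i ω - V i ω| ∂ℙ = 1/3 := by
    rw [MeasureTheory.integral_const_mul, integral_finset_sum _ (fun i _ => hintA i i)]
    simp only [hEA, Finset.sum_const, Finset.card_univ, Fintype.card_fin, nsmul_eq_mul]
    field_simp
  have h2 : ∫ ω, (1 / (n:ℝ)^2) * ∑ i : Fin n, ∑ j : Fin n, |U i ω - V j ω| ∂ℙ = 1/3 := by
    rw [MeasureTheory.integral_const_mul,
      integral_finset_sum _ (fun i _ => integrable_finset_sum _ fun j _ => hintA i j)]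
    have : ∀ i : Fin n, (∫ ω, ∑ j : Fin n, |U i ω - V j ω| ∂ℙ) = (n:ℝ)/3 := by
      intro i
      rw [integral_finset_sum _ (fun j _ => hintA i j)]
      simp only [hEA, Finset.sum_const, Finset.card_univ, Fintype.card_fin, nsmul_eq_mul]
      ring
    simp only [this, Finset.sum_const, Finset.card_univ, Fintype.card_fin, nsmul_eq_mul]
    field_simp
  have h1 : ∫ ω, ((1 / (n:ℝ)^2) * ∑ i : Fin n, ∑ j : Fin n, |U i ω - V j ω|)
      * ((1 / (n:ℝ)) * ∑ i : Fin n, |U i ω - V i ω|) ∂ℙ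
      = (1/(n:ℝ)^3) * ∑ i : Fin n, ∑ j : Fin n, ∑ k : Fin n, e i j k := by
    have hpt : ∀ ω, ((1 / (n:ℝ)^2) * ∑ i : Fin n, ∑ j : Fin n, |U i ω - V j ω|)
        * ((1 / (n:ℝ)) * ∑ i : Fin n, |U i ω - V i ω|)
        = (1/(n:ℝ)^3) * ∑ i : Fin n, ∑ j : Fin n, ∑ k : Fin n,
            |U i ω - V j ω| * |U k ω - V k ω| := by
      intro ω
      have hss : (∑ i : Fin n, ∑ j : Fin n, |U i ω - V j ω|) * (∑ k : Fin n, |U k ω - V k ω|)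
          = ∑ i : Fin n, ∑ j : Fin n, ∑ k : Fin n, |U i ω - V j ω| * |U k ω - V k ω| := by
        rw [Finset.sum_mul]
        refine Finset.sum_congr rfl fun i _ => ?_
        rw [Finset.sum_mul]
        refine Finset.sum_congr rfl fun j _ => ?_
        rw [Finset.mul_sum]
      calc ((1 / (n:ℝ)^2) * ∑ i : Fin n, ∑ j : Fin n, |U i ω - V j ω|)
            * ((1 / (n:ℝ)) * ∑ i : Fin n, |U i ω - V i ω|)
          = (1/(n:ℝ)^3) * ((∑ i : Fin n, ∑ j : Fin n, |U i ω - V j ω|)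
              * (∑ k : Fin n, |U k ω - V k ω|)) := by ring
        _ = _ := by rw [hss]
    simp only [hpt]
    rw [MeasureTheory.integral_const_mul,
      integral_finset_sum _ (fun i _ => integrable_finset_sum _ fun j _ =>
        integrable_finset_sum _ fun k _ => hintAB i j k)]
    congr 1
    refine Finset.sum_congr rfl fun i _ => ?_
    rw [integral_finset_sum _ (fun j _ => integrable_finset_sum _ fun k _ => hintAB i j k)]
    refine Finset.sum_congr rfl fun j _ => ?_
    rw [integral_finset_sum _ (fun k _ => hintAB i j k)]
    exact Finset.sum_congr rfl fun k _ => hE i j k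
  have hT : ∑ i : Fin n, ∑ j : Fin n, ∑ k : Fin n, e i j k
      = (n:ℝ)^3/9 + (n:ℝ)^2/90 + 2*(n:ℝ)/45 := by
    simp [he, Finset.sum_add_distrib, Finset.sum_ite_eq, Finset.sum_ite_eq',
      Finset.sum_const, Finset.card_univ, Fintype.card_fin]
    ring
  rw [h1, h2, h3, hT]
  field_simp
  ring
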